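/- Let α : Fin m → ℝ and β : Fin n → ℝ be nonnegative weights with ∑_j α_j = 1 and ∑_k β_k = 1, and let p : Fin m → [0,1] and q : Fin n → [0,1]. Set u := ∑_j α_j · 2√(p_j(1−p_j)) and v := ∑_k β_k · 2√(q_k(1−q_k)). Then ∑_{j,k} α_j β_k · 2√((p_j⋆q_k)(1−(p_j⋆q_k))) ≤ u + v − u·v. (This is the statement that for BMS channels V, W, Z(V Ｓ W) ≤ Z(BEC(Z(V)) Ｓ BEC(Z(W))) = Z(V) + Z(W) − Z(V)Z(W).) -/
import Mathlib


/-- The serial-combination crossover probability `p⋆q := p(1−q) + (1−p)q`. -/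
def serial (p q : ℝ) : ℝ := p * (1 - q) + (1 - p) * q

/-- The Bhattacharyya parameter of `BSC(p)`, namely `Z(BSC(p)) := 2√(p(1−p))`. -/
noncomputable def bhat (p : ℝ) : ℝ := 2 * Real.sqrt (p * (1 - p))

lemma bhat_nonneg (p : ℝ) : 0 ≤ bhat p := by
  unfold bhat; positivity

lemma bhat_le_one {p : ℝ} (hp : p ∈ Set.Icc (0 : ℝ) 1) : bhat p ≤ 1 := by
  unfold bhat
  have h : Real.sqrt (p * (1 - p)) ≤ Real.sqrt (1/4) := by
    apply Real.sqrt_le_sqrt; nlinarith [sq_nonneg (p - 1/2)]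
  have h4 : Real.sqrt (1/4) = 1/2 := by
    rw [show (1/4 : ℝ) = (1/2)^2 by norm_num, Real.sqrt_sq (by norm_num)]
  linarith

lemma bhat_sq {p : ℝ} (hp : p ∈ Set.Icc (0 : ℝ) 1) : (bhat p)^2 = 4 * (p * (1 - p)) := by
  unfold bhat
  have h : 0 ≤ p * (1 - p) := mul_nonneg hp.1 (by linarith [hp.2])
  rw [mul_pow, Real.sq_sqrt h]; ring

lemma bhat_serial_le {p q : ℝ} (hp : p ∈ Set.Icc (0 : ℝ) 1) (hq : q ∈ Set.Icc (0 : ℝ) 1) :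
    bhat (serial p q) ≤ bhat p + bhat q - bhat p * bhat q := by
  set a := bhat p with ha
  set b := bhat q with hb
  have ha0 : 0 ≤ a := bhat_nonneg p
  have hb0 : 0 ≤ b := bhat_nonneg q
  have ha1 : a ≤ 1 := bhat_le_one hp
  have hb1 : b ≤ 1 := bhat_le_one hq
  have hc : 0 ≤ a + b - a * b := by nlinarith
  have hs : serial p q ∈ Set.Icc (0 : ℝ) 1 := by
    constructor
    · unfold serial
      have := hp.1; have := hp.2; have := hq.1; have := hq.2
      nlinarith
    · unfold serial
      have := hp.1; have := hp.2; have := hq.1; have := hq.2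
      nlinarith
  have key : (bhat (serial p q))^2 ≤ (a + b - a * b)^2 := by
    rw [bhat_sq hs]
    have hpa : a^2 = 4 * (p * (1 - p)) := bhat_sq hp
    have hqb : b^2 = 4 * (q * (1 - q)) := bhat_sq hq
    have hid : 4 * (serial p q * (1 - serial p q)) = a^2 + b^2 - a^2 * b^2 := by
      rw [hpa, hqb]; unfold serial; ring
    rw [hid]
    nlinarith [mul_nonneg ha0 hb0, mul_nonneg (mul_nonneg ha0 hb0)
      (mul_nonneg (by linarith : (0:ℝ) ≤ 1 - a) (by linarith : (0:ℝ) ≤ 1 - b))]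
  have h0 : 0 ≤ bhat (serial p q) := bhat_nonneg _
  nlinarith [key, h0, hc]

/-- For BMS channels `V, W` with BSC-decompositions `∑ α_j BSC(p_j)` and `∑ β_k BSC(q_k)`,
setting `u := Z(V)` and `v := Z(W)`, one has
`Z(V Ｓ W) ≤ u + v − u·v = Z(BEC(u) Ｓ BEC(v))`. -/
theorem stmt_5 (m n : ℕ) (α : Fin m → ℝ) (β : Fin n → ℝ)
    (hα : ∀ j, 0 ≤ α j) (hβ : ∀ k, 0 ≤ β k)
    (hαsum : ∑ j, α j = 1) (hβsum : ∑ k, β k = 1)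
    (p : Fin m → ℝ) (q : Fin n → ℝ)
    (hp : ∀ j, p j ∈ Set.Icc (0 : ℝ) 1) (hq : ∀ k, q k ∈ Set.Icc (0 : ℝ) 1)
    (u v : ℝ) (hu : u = ∑ j, α j * bhat (p j)) (hv : v = ∑ k, β k * bhat (q k)) :
    ∑ j, ∑ k, α j * β k * bhat (serial (p j) (q k)) ≤ u + v - u * v := by
  have step1 : ∑ j, ∑ k, α j * β k * bhat (serial (p j) (q k)) ≤
      ∑ j, ∑ k, α j * β k * (bhat (p j) + bhat (q k) - bhat (p j) * bhat (q k)) := by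
    apply Finset.sum_le_sum; intro j _
    apply Finset.sum_le_sum; intro k _
    exact mul_le_mul_of_nonneg_left (bhat_serial_le (hp j) (hq k))
      (mul_nonneg (hα j) (hβ k))
  have step2 : ∑ j, ∑ k, α j * β k * (bhat (p j) + bhat (q k) - bhat (p j) * bhat (q k))
      = u + v - u * v := by
    subst hu hv
    have : ∀ j, ∑ k, α j * β k * (bhat (p j) + bhat (q k) - bhat (p j) * bhat (q k))
        = α j * bhat (p j) * (∑ k, β k) + α j * (∑ k, β k * bhat (q k))
          - α j * bhat (p j) * (∑ k, β k * bhat (q k)) := by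
      intro j
      rw [Finset.mul_sum, Finset.mul_sum, Finset.mul_sum, ← Finset.sum_add_distrib,
        ← Finset.sum_sub_distrib]
      apply Finset.sum_congr rfl; intro k _; ring
    simp only [this, hβsum, mul_one]
    rw [Finset.sum_sub_distrib, Finset.sum_add_distrib, ← Finset.sum_mul, ← Finset.sum_mul,
      hαsum, one_mul]
  linarith
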